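/- Let n and d be odd positive integers with d < (n+1)/2, and let h ≤ n be a nonnegative integer satisfying the global support inequality 4dh ≥ (n+1)(d+1). Then there exists an approving configuration with parameters (n, d, h). -/

import Mathlib

open Finset
open scoped Classical

/-- The closed neighborhood `N[v] = {v} ∪ N(v)` of a vertex `v` in a simple graph `G`.
A `d`-regular graph with loops is modeled by a simple graph in which every
closed neighborhood has size `d`. -/
noncomputable def closedNbhd {n : ℕ} (G : SimpleGraph (Fin n)) (v : Fin n) : Finset (Fin n) :=
  Finset.univ.filter fun u => u = v ∨ G.Adj v u

/-- A configuration with parameters `(n, d, h)`: a simple graph `G` on `n` vertices all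
of whose closed neighborhoods have size `d` (i.e. a `d`-regular graph with loops),
together with an opinion function `f : V → {1, -1}` having exactly `h` happy vertices. -/
def IsConfig {n : ℕ} (d h : ℕ) (G : SimpleGraph (Fin n)) (f : Fin n → ℤ) : Prop :=
  (∀ v, (closedNbhd G v).card = d) ∧ (∀ v, f v = 1 ∨ f v = -1) ∧
  (Finset.univ.filter fun v => f v = 1).card = h

/-- The number of proponents: vertices `v` with `∑_{u ∈ N[v]} f u ≥ 1`. -/
noncomputable def numProponents {n : ℕ} (G : SimpleGraph (Fin n)) (f : Fin n → ℤ) : ℕ :=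
  (Finset.univ.filter fun v => 1 ≤ ∑ u ∈ closedNbhd G v, f u).card

/-- A configuration is approving if more than `n/2` of its vertices are proponents. -/
def IsApproving {n : ℕ} (G : SimpleGraph (Fin n)) (f : Fin n → ℤ) : Prop :=
  2 * numProponents G f > n

/-- `hmin n d`: the least `h` for which an approving configuration with parameters
`(n, d, h)` exists. -/
noncomputable def hmin (n d : ℕ) : ℕ :=
  sInf {h : ℕ | ∃ (G : SimpleGraph (Fin n)) (f : Fin n → ℤ), IsConfig d h G f ∧ IsApproving G f}

/-- `hmax n d`: the greatest `h ≤ n` for which a disapproving configuration with parameters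
`(n, d, h)` exists. -/
noncomputable def hmax (n d : ℕ) : ℕ :=
  sSup {h : ℕ | h ≤ n ∧
    ∃ (G : SimpleGraph (Fin n)) (f : Fin n → ℤ), IsConfig d h G f ∧ ¬ IsApproving G f}

/-- `hminN n`: the minimum of `hmin n d` over odd `d` with `1 ≤ d ≤ n`. -/
noncomputable def hminN (n : ℕ) : ℕ :=
  sInf {m : ℕ | ∃ d : ℕ, Odd d ∧ 1 ≤ d ∧ d ≤ n ∧ m = hmin n d}

namespace Stmt10Aux

def cdist (L a b : ℕ) : ℕ := min ((a + L - b) % L) ((b + L - a) % L)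

lemma cdist_comm (L a b : ℕ) : cdist L a b = cdist L b a := min_comm _ _

lemma cdist_self (L a : ℕ) : cdist L a a = 0 := by
  have h : a + L - a = L := by omega
  simp [cdist, h]

lemma mod_cases (L x : ℕ) (hx : x < 2 * L) (hL : 0 < L) :
    x % L = x ∨ x % L + L = x := by
  rcases Nat.lt_or_ge x L with h | h
  · left; exact Nat.mod_eq_of_lt h
  · right
    have h1 : x % L = (x - L) % L := Nat.mod_eq_sub_mod h
    have h2 : x - L < L := by omega
    rw [h1, Nat.mod_eq_of_lt h2]; omega

lemma mod_shift₁ (L a j : ℕ) (ha : a < L) (hj : j < L) :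
    ((a + j) % L + L - a) % L = j := by
  rcases mod_cases L (a + j) (by omega) (by omega) with h | h
  · have h2 : (a + j) % L + L - a = j + L := by omega
    rw [h2, Nat.add_mod_right, Nat.mod_eq_of_lt hj]
  · have h2 : (a + j) % L + L - a = j := by omega
    rw [h2, Nat.mod_eq_of_lt hj]

lemma mod_shift₂ (L a j : ℕ) (ha : a < L) (hj : j < L) :
    (a + L - (a + j) % L) % L = (L - j) % L := by
  rcases mod_cases L (a + j) (by omega) (by omega) with h | h
  · have h2 : a + L - (a + j) % L = L - j := by omega
    rw [h2]
  · have h2 : a + L - (a + j) % L = L + (L - j) := by omega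
    rw [h2, Nat.add_mod_left]

lemma cdist_eq (L a j : ℕ) (ha : a < L) (hj : j < L) :
    cdist L ((a + j) % L) a = min j ((L - j) % L) := by
  unfold cdist
  rw [mod_shift₁ L a j ha hj, mod_shift₂ L a j ha hj]

lemma absorb_mod (L a t : ℕ) : (a + t) % L = (a + t % L) % L := by
  conv_lhs => rw [Nat.add_mod]
  conv_rhs => rw [Nat.add_mod, Nat.mod_mod_of_dvd _ dvd_rfl]

/-- forward membership: each point of the arc is within distance r of the center. -/
lemma memA (L a r k : ℕ) (hL : 2 * r + 1 ≤ L) (ha : a < L) (hk : k < 2 * r + 1) :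
    cdist L ((a + (L - r) + k) % L) a ≤ r := by
  have hL0 : 0 < L := by omega
  have hb : (a + (L - r) + k) % L = (a + (L - r + k) % L) % L := by
    rw [Nat.add_assoc]; exact absorb_mod L a (L - r + k)
  set j := (L - r + k) % L with hjdef
  have hj : j < L := Nat.mod_lt _ hL0
  rw [hb, cdist_eq L a j ha hj]
  rcases Nat.lt_or_ge k r with hkr | hkr
  · have hjval : j = L - r + k := Nat.mod_eq_of_lt (by omega)
    have : (L - j) % L = r - k := by
      rw [hjval]
      have : L - (L - r + k) = r - k := by omega
      rw [this, Nat.mod_eq_of_lt (by omega)]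
    rw [this]
    exact le_trans (min_le_right _ _) (by omega)
  · have hjval : j = k - r := by
      rcases mod_cases L (L - r + k) (by omega) hL0 with h | h
      · omega
      · omega
    exact le_trans (min_le_left _ _) (by omega)

/-- backward membership: every point within distance r of the center is in the arc. -/
lemma memB (L a r b : ℕ) (hL : 2 * r + 1 ≤ L) (ha : a < L) (hb : b < L)
    (hcd : cdist L b a ≤ r) : ∃ k < 2 * r + 1, (a + (L - r) + k) % L = b := by
  have hL0 : 0 < L := by omega
  set j := (b + L - a) % L with hjdef
  have hj : j < L := Nat.mod_lt _ hL0
  have hbj : b = (a + j) % L := by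
    rw [hjdef, ← absorb_mod]
    have : a + (b + L - a) = b + L := by omega
    rw [this, Nat.add_mod_right, Nat.mod_eq_of_lt hb]
  rw [hbj, cdist_eq L a j ha hj] at hcd
  rcases le_or_gt j r with h1 | h1
  · refine ⟨j + r, by omega, ?_⟩
    have h5 : a + (L - r) + (j + r) = a + j + L := by omega
    rw [h5, Nat.add_mod_right, ← hbj]
  · have h2 : (L - j) % L ≤ r := by
      rcases min_le_iff.mp hcd with h | h
      · omega
      · exact h
    have h3 : (L - j) % L = L - j := Nat.mod_eq_of_lt (by omega)
    have h4 : L - r ≤ j := by omega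
    refine ⟨j - (L - r), by omega, ?_⟩
    have h5 : a + (L - r) + (j - (L - r)) = a + j := by omega
    rw [h5, ← hbj]

lemma mod_inj (L c k k' : ℕ) (hk : k < L) (hk' : k' < L)
    (h : (c + k) % L = (c + k') % L) : k = k' := by
  have h1 : (c + k) ≡ (c + k') [MOD L] := h
  have h2 : k ≡ k' [MOD L] := Nat.ModEq.add_left_cancel' c h1
  have h3 : k % L = k' % L := h2
  rwa [Nat.mod_eq_of_lt hk, Nat.mod_eq_of_lt hk'] at h3

/-- The arc filter equals the image of `range (2r+1)`. -/
lemma arc_filter_eq (n s L r a : ℕ) (hL : 2 * r + 1 ≤ L) (hsL : s + L ≤ n) (ha : a < L) :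
    (univ.filter (fun u : Fin n => s ≤ u.val ∧ u.val < s + L ∧ cdist L (u.val - s) a ≤ r)) =
    (range (2 * r + 1)).image (fun k =>
      (⟨s + (a + (L - r) + k) % L, by
        have := Nat.mod_lt (a + (L - r) + k) (show 0 < L by omega); omega⟩ : Fin n)) := by
  ext u
  simp only [mem_filter, mem_univ, true_and, mem_image, mem_range]
  constructor
  · rintro ⟨h1, h2, h3⟩
    obtain ⟨k, hk, hkeq⟩ := memB L a r (u.val - s) hL ha (by omega) h3
    exact ⟨k, hk, by apply Fin.ext; simp; omega⟩
  · rintro ⟨k, hk, rfl⟩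
    simp only []
    have hb : (a + (L - r) + k) % L < L := Nat.mod_lt _ (show 0 < L by omega)
    refine ⟨by omega, by omega, ?_⟩
    have h5 : s + (a + (L - r) + k) % L - s = (a + (L - r) + k) % L := by omega
    rw [h5]
    exact memA L a r k hL ha hk

lemma arc_injOn (n s L r a : ℕ) (hL : 2 * r + 1 ≤ L) (hsL : s + L ≤ n) (ha : a < L) :
    Set.InjOn (fun k =>
      (⟨s + (a + (L - r) + k) % L, by
        have := Nat.mod_lt (a + (L - r) + k) (show 0 < L by omega); omega⟩ : Fin n))
      (range (2 * r + 1)) := by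
  intro k hk k' hk' he
  simp only [coe_range, Set.mem_Iio, mem_range] at hk hk'
  have h1 : (a + (L - r) + k) % L = (a + (L - r) + k') % L := by
    have := congrArg Fin.val he
    simp at this; omega
  exact mod_inj L (a + (L - r)) k k'
    (Nat.lt_of_lt_of_le (by omega) hL) (Nat.lt_of_lt_of_le (by omega) hL)
    (by rw [Nat.add_assoc, Nat.add_assoc] at h1 ⊢; exact h1)

lemma arc_card (n s L r a : ℕ) (hL : 2 * r + 1 ≤ L) (hsL : s + L ≤ n) (ha : a < L) :
    (univ.filter (fun u : Fin n =>
      s ≤ u.val ∧ u.val < s + L ∧ cdist L (u.val - s) a ≤ r)).card = 2 * r + 1 := by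
  rw [arc_filter_eq n s L r a hL hsL ha,
    Finset.card_image_of_injOn (arc_injOn n s L r a hL hsL ha), card_range]

lemma arc_sum (n s L r a : ℕ) (hL : 2 * r + 1 ≤ L) (hsL : s + L ≤ n) (ha : a < L)
    (f : Fin n → ℤ) :
    ∑ u ∈ univ.filter (fun u : Fin n =>
        s ≤ u.val ∧ u.val < s + L ∧ cdist L (u.val - s) a ≤ r), f u =
    ∑ k ∈ range (2 * r + 1), f
      (⟨s + (a + (L - r) + k) % L, by
        have := Nat.mod_lt (a + (L - r) + k) (show 0 < L by omega); omega⟩ : Fin n) := by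
  rw [arc_filter_eq n s L r a hL hsL ha,
    Finset.sum_image (fun x hx y hy => arc_injOn n s L r a hL hsL ha hx hy)]

/-! ### Sturmian counting -/

lemma P_step_le (m q x : ℕ) (hm : 0 < m) (hq : q ≤ m) :
    (x + 1) * q / m ≤ x * q / m + 1 := by
  have h1 : (x + 1) * q = x * q + q := by ring
  rw [h1]
  calc (x * q + q) / m ≤ (x * q + m) / m := Nat.div_le_div_right (by omega)
    _ = x * q / m + 1 := Nat.add_div_right _ hm

lemma P_mono (m q x : ℕ) : x * q / m ≤ (x + 1) * q / m :=
  Nat.div_le_div_right (Nat.mul_le_mul_right q (by omega))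

lemma count_P (m q : ℕ) (hm : 0 < m) (hq : q ≤ m) (t : ℕ) :
    ((range t).filter (fun x => x * q / m < (x + 1) * q / m)).card = t * q / m := by
  induction t with
  | zero => simp
  | succ t ih =>
    rw [Finset.range_add_one, Finset.filter_insert]
    by_cases hP : t * q / m < (t + 1) * q / m
    · rw [if_pos hP, Finset.card_insert_of_notMem (by simp), ih]
      have := P_step_le m q t hm hq
      omega
    · rw [if_neg hP, ih]
      have := P_mono m q t
      omega

lemma count_P_shift (m q : ℕ) (hm : 0 < m) (hq : q ≤ m) (c k : ℕ) :
    c * q / m + ((range k).filter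
      (fun i => (c + i) * q / m < (c + i + 1) * q / m)).card = (c + k) * q / m := by
  induction k with
  | zero => simp
  | succ k ih =>
    rw [Finset.range_add_one, Finset.filter_insert]
    by_cases hP : (c + k) * q / m < (c + k + 1) * q / m
    · rw [if_pos hP, Finset.card_insert_of_notMem (by simp)]
      have h1 := P_step_le m q (c + k) hm hq
      have h2 : c + (k + 1) = (c + k) + 1 := by omega
      rw [h2]
      omega
    · rw [if_neg hP]
      have h2 : c + (k + 1) = (c + k) + 1 := by omega
      have := P_mono m q (c + k)
      rw [h2]
      omega

lemma F_superadd (m q a b : ℕ) (hm : 0 < m) :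
    a * q / m + b * q / m ≤ (a + b) * q / m := by
  rw [Nat.le_div_iff_mul_le hm, Nat.add_mul, Nat.add_mul]
  exact Nat.add_le_add (Nat.div_mul_le_self _ _) (Nat.div_mul_le_self _ _)

lemma P_period (m q x : ℕ) (hm : 0 < m) :
    ((x % m) * q / m < (x % m + 1) * q / m) ↔ (x * q / m < (x + 1) * q / m) := by
  have hx : x = x % m + (x / m) * m := (Nat.mod_add_div' x m).symm
  have h1 : x * q = (x % m) * q + ((x / m) * q) * m := by
    conv_lhs => rw [hx]
    ring
  have h2 : (x + 1) * q = (x % m + 1) * q + ((x / m) * q) * m := by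
    conv_lhs => rw [hx]
    ring
  rw [h1, h2, Nat.add_mul_div_right _ _ hm, Nat.add_mul_div_right _ _ hm]
  omega

/-! ### Fin filter cardinalities -/

lemma card_fin_filter (n : ℕ) (p : ℕ → Prop) [DecidablePred p] :
    (univ.filter (fun v : Fin n => p v.val)).card = ((range n).filter p).card := by
  refine Finset.card_bij' (fun v _ => v.val)
    (fun x hx => (⟨x, mem_range.mp (mem_filter.mp hx).1⟩ : Fin n)) ?_ ?_ ?_ ?_
  · intro a ha; simp at ha ⊢; exact ha
  · intro x hx; simp at hx ⊢; exact hx.2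
  · intro a ha; simp
  · intro x hx; simp

/-! ### The two-block circulant graph -/

def G0 (n m r : ℕ) : SimpleGraph (Fin n) where
  Adj u v := u ≠ v ∧ ((u.val < m ∧ v.val < m ∧ cdist m u.val v.val ≤ r) ∨
    (m ≤ u.val ∧ m ≤ v.val ∧ cdist (n - m) (u.val - m) (v.val - m) ≤ r))
  symm := by
    constructor
    rintro u v ⟨h1, h2 | h2⟩
    · exact ⟨h1.symm, Or.inl ⟨h2.2.1, h2.1, by rw [cdist_comm]; exact h2.2.2⟩⟩
    · exact ⟨h1.symm, Or.inr ⟨h2.2.1, h2.1, by rw [cdist_comm]; exact h2.2.2⟩⟩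
  loopless := ⟨fun v h => h.1 rfl⟩

lemma G0_adj (n m r : ℕ) (u v : Fin n) : (G0 n m r).Adj u v ↔ u ≠ v ∧
    ((u.val < m ∧ v.val < m ∧ cdist m u.val v.val ≤ r) ∨
     (m ≤ u.val ∧ m ≤ v.val ∧ cdist (n - m) (u.val - m) (v.val - m) ≤ r)) := Iff.rfl

lemma closedNbhd_low (n m r : ℕ) (v : Fin n) (hv : v.val < m) :
    closedNbhd (G0 n m r) v =
    univ.filter (fun u : Fin n =>
      0 ≤ u.val ∧ u.val < 0 + m ∧ cdist m (u.val - 0) v.val ≤ r) := by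
  ext u
  simp only [closedNbhd, mem_filter, mem_univ, true_and, G0_adj]
  constructor
  · rintro (rfl | ⟨hne, h | h⟩)
    · refine ⟨Nat.zero_le _, by omega, ?_⟩
      simp [cdist_self]
    · refine ⟨Nat.zero_le _, by omega, ?_⟩
      rw [Nat.sub_zero, cdist_comm]
      exact h.2.2
    · exact absurd h.1 (by omega)
  · rintro ⟨-, h2, h3⟩
    rw [Nat.sub_zero] at h3
    by_cases he : u = v
    · exact Or.inl he
    · exact Or.inr ⟨Ne.symm he, Or.inl ⟨hv, by omega, by rw [cdist_comm]; exact h3⟩⟩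

lemma closedNbhd_high (n m r : ℕ) (hmn : m ≤ n) (v : Fin n) (hv : m ≤ v.val) :
    closedNbhd (G0 n m r) v =
    univ.filter (fun u : Fin n =>
      m ≤ u.val ∧ u.val < m + (n - m) ∧ cdist (n - m) (u.val - m) (v.val - m) ≤ r) := by
  have hv2 : v.val < n := v.isLt
  ext u
  have hu2 : u.val < n := u.isLt
  simp only [closedNbhd, mem_filter, mem_univ, true_and, G0_adj]
  constructor
  · rintro (rfl | ⟨hne, h | h⟩)
    · refine ⟨hv, by omega, ?_⟩
      simp [cdist_self]
    · exact absurd h.1 (by omega)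
    · refine ⟨h.2.1, by omega, ?_⟩
      rw [cdist_comm]
      exact h.2.2
  · rintro ⟨h1, h2, h3⟩
    by_cases he : u = v
    · exact Or.inl he
    · exact Or.inr ⟨Ne.symm he, Or.inr ⟨hv, h1, by rw [cdist_comm]; exact h3⟩⟩

end Stmt10Aux

/-- for low-degree classes (`d < (n+1)/2`), any `h ≤ n` satisfying the
global support inequality `4dh ≥ (n+1)(d+1)` admits an approving configuration. -/
theorem stmt10 (n d h : ℕ) (hn : Odd n) (hd : Odd d) (hnpos : 0 < n) (hdpos : 0 < d)
    (hlow : 2 * d < n + 1) (hhn : h ≤ n) (hglob : 4 * d * h ≥ (n + 1) * (d + 1)) :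
    ∃ (G : SimpleGraph (Fin n)) (f : Fin n → ℤ), IsConfig d h G f ∧ IsApproving G f := by
  classical
  obtain ⟨k0, hk0⟩ := hn
  obtain ⟨r, hrd⟩ := hd
  set m : ℕ := k0 + 1 with hmdef
  have hm2 : 2 * m = n + 1 := by omega
  have hm0 : 0 < m := by omega
  have hmn : m ≤ n := by omega
  have hdm : 2 * r + 1 ≤ m := by omega
  have hdnm : 2 * r + 1 ≤ n - m := by omega
  set q : ℕ := min h m with hqdef
  have hq : q ≤ m := min_le_right _ _
  have hkey : m * (r + 1) ≤ (2 * r + 1) * q := by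
    rcases le_or_gt m h with hc | hc
    · have hqm : q = m := by omega
      rw [hqm, mul_comm]
      exact Nat.mul_le_mul_right m (by omega)
    · have hqh : q = h := by omega
      rw [hqh]
      have h2 : (n + 1) * (d + 1) = 4 * (m * (r + 1)) := by rw [hrd, ← hm2]; ring
      have h3 : 4 * d * h = 4 * ((2 * r + 1) * h) := by rw [hrd]; ring
      have h4 : 4 * (m * (r + 1)) ≤ 4 * ((2 * r + 1) * h) := by rw [← h2, ← h3]; exact hglob
      exact Nat.le_of_mul_le_mul_left h4 (by norm_num)
  set e : ℕ := h - q with hedef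
  have hme : m + e ≤ n := by omega
  set f : Fin n → ℤ := fun v =>
    if (v.val < m ∧ v.val * q / m < (v.val + 1) * q / m) ∨ (m ≤ v.val ∧ v.val < m + e)
    then 1 else -1 with hfdef
  refine ⟨Stmt10Aux.G0 n m r, f, ⟨?_, ?_, ?_⟩, ?_⟩
  · -- closed neighborhoods have size d
    intro v
    rcases Nat.lt_or_ge v.val m with hv | hv
    · rw [Stmt10Aux.closedNbhd_low n m r v hv,
        Stmt10Aux.arc_card n 0 m r v.val hdm (by omega) hv]
      omega
    · rw [Stmt10Aux.closedNbhd_high n m r hmn v hv,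
        Stmt10Aux.arc_card n m (n - m) r (v.val - m) hdnm (by omega) (by omega)]
      omega
  · -- f takes values ±1
    intro v
    by_cases hc : (v.val < m ∧ v.val * q / m < (v.val + 1) * q / m) ∨ (m ≤ v.val ∧ v.val < m + e)
    · left; simp [hfdef, hc]
    · right; simp [hfdef, hc]
  · -- exactly h happy vertices
    have hiff : ∀ v : Fin n, f v = 1 ↔
        ((v.val < m ∧ v.val * q / m < (v.val + 1) * q / m) ∨ (m ≤ v.val ∧ v.val < m + e)) := by
      intro v
      by_cases hc : (v.val < m ∧ v.val * q / m < (v.val + 1) * q / m) ∨ (m ≤ v.val ∧ v.val < m + e)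
      · simp [hfdef, hc]
      · simp [hfdef, hc]
    have h1 : (Finset.univ.filter fun v : Fin n => f v = 1) =
        Finset.univ.filter (fun v : Fin n =>
          (v.val < m ∧ v.val * q / m < (v.val + 1) * q / m) ∨ (m ≤ v.val ∧ v.val < m + e)) := by
      apply Finset.filter_congr
      intro v _
      exact hiff v
    rw [h1, Finset.filter_or, Finset.card_union_of_disjoint]
    · have hA : (Finset.univ.filter (fun v : Fin n =>
          v.val < m ∧ v.val * q / m < (v.val + 1) * q / m)).card = q := by
        rw [Stmt10Aux.card_fin_filter n
          (fun x => x < m ∧ x * q / m < (x + 1) * q / m)]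
        have h2 : (Finset.range n).filter (fun x => x < m ∧ x * q / m < (x + 1) * q / m) =
            (Finset.range m).filter (fun x => x * q / m < (x + 1) * q / m) := by
          ext x
          simp only [Finset.mem_filter, Finset.mem_range]
          constructor
          · rintro ⟨_, h3, h4⟩; exact ⟨h3, h4⟩
          · rintro ⟨h3, h4⟩; exact ⟨by omega, h3, h4⟩
        rw [h2, Stmt10Aux.count_P m q hm0 hq m, Nat.mul_div_cancel_left q hm0]
      have hB : (Finset.univ.filter (fun v : Fin n =>
          m ≤ v.val ∧ v.val < m + e)).card = e := by
        rw [Stmt10Aux.card_fin_filter n (fun x => m ≤ x ∧ x < m + e)]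
        have h2 : (Finset.range n).filter (fun x => m ≤ x ∧ x < m + e) =
            Finset.Ico m (m + e) := by
          ext x
          simp only [Finset.mem_filter, Finset.mem_range, Finset.mem_Ico]
          omega
        rw [h2, Nat.card_Ico]
        omega
      rw [hA, hB]
      omega
    · rw [Finset.disjoint_left]
      intro v hv1 hv2
      simp only [Finset.mem_filter] at hv1 hv2
      omega
  · -- approving
    have hprop : ∀ v : Fin n, v.val < m →
        1 ≤ ∑ u ∈ closedNbhd (Stmt10Aux.G0 n m r) v, f u := by
      intro v hv
      rw [Stmt10Aux.closedNbhd_low n m r v hv,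
        Stmt10Aux.arc_sum n 0 m r v.val hdm (by omega) hv f]
      have hfval : ∀ k : ℕ, ∀ pf : (0 + (v.val + (m - r) + k) % m) < n,
          f ⟨0 + (v.val + (m - r) + k) % m, pf⟩ =
          if (v.val + (m - r) + k) * q / m < (v.val + (m - r) + k + 1) * q / m
          then (1 : ℤ) else -1 := by
        intro k pf
        have hlt : (v.val + (m - r) + k) % m < m := Nat.mod_lt _ hm0
        rw [hfdef]
        simp only [zero_add]
        apply if_congr _ rfl rfl
        constructor
        · rintro (⟨_, hp⟩ | ⟨hge, _⟩)
          · exact (Stmt10Aux.P_period m q (v.val + (m - r) + k) hm0).mp hp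
          · omega
        · intro hp
          exact Or.inl ⟨hlt, (Stmt10Aux.P_period m q (v.val + (m - r) + k) hm0).mpr hp⟩
      rw [Finset.sum_congr rfl (fun k _ => hfval k _)]
      rw [Finset.sum_ite, Finset.sum_const, Finset.sum_const]
      have h12 : ((Finset.range (2 * r + 1)).filter
            (fun k => (v.val + (m - r) + k) * q / m < (v.val + (m - r) + k + 1) * q / m)).card +
          ((Finset.range (2 * r + 1)).filter
            (fun k => ¬((v.val + (m - r) + k) * q / m < (v.val + (m - r) + k + 1) * q / m))).card
          = 2 * r + 1 := by
        rw [Finset.card_filter_add_card_filter_not, Finset.card_range]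
      have hge : r + 1 ≤ ((Finset.range (2 * r + 1)).filter
          (fun k => (v.val + (m - r) + k) * q / m < (v.val + (m - r) + k + 1) * q / m)).card := by
        have hs := Stmt10Aux.count_P_shift m q hm0 hq (v.val + (m - r)) (2 * r + 1)
        have hsup := Stmt10Aux.F_superadd m q (v.val + (m - r)) (2 * r + 1) hm0
        have hc4 : r + 1 ≤ (2 * r + 1) * q / m := by
          rw [Nat.le_div_iff_mul_le hm0, mul_comm]
          exact hkey
        omega
      rw [nsmul_eq_mul, nsmul_eq_mul]
      have hge' : (r : ℤ) + 1 ≤ (((Finset.range (2 * r + 1)).filter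
          (fun k => (v.val + (m - r) + k) * q / m < (v.val + (m - r) + k + 1) * q / m)).card : ℤ) := by
        exact_mod_cast hge
      have h12' : (((Finset.range (2 * r + 1)).filter
            (fun k => (v.val + (m - r) + k) * q / m < (v.val + (m - r) + k + 1) * q / m)).card : ℤ) +
          (((Finset.range (2 * r + 1)).filter
            (fun k => ¬((v.val + (m - r) + k) * q / m < (v.val + (m - r) + k + 1) * q / m))).card : ℤ)
          = 2 * r + 1 := by
        exact_mod_cast h12
      linarith
    unfold IsApproving numProponents
    have hsub : (Finset.univ.filter (fun v : Fin n => v.val < m)) ⊆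
        Finset.univ.filter (fun v : Fin n =>
          1 ≤ ∑ u ∈ closedNbhd (Stmt10Aux.G0 n m r) v, f u) := by
      intro v hv
      simp only [Finset.mem_filter, Finset.mem_univ, true_and] at hv ⊢
      exact hprop v hv
    have hcard : (Finset.univ.filter (fun v : Fin n => v.val < m)).card = m := by
      rw [Stmt10Aux.card_fin_filter n (fun x => x < m)]
      have h2 : (Finset.range n).filter (fun x => x < m) = Finset.range m := by
        ext x
        simp only [Finset.mem_filter, Finset.mem_range]
        omega
      rw [h2, Finset.card_range]
    have := Finset.card_le_card hsub
    omega
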